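/- Let f and f' be holomorphic functions on ℍ×ℂ and let m, m' be integers. Then for every Y ∈ ℤ²: ( m'(∂_z f)·f' − m·f·(∂_z f') )|_{m+m'} Y = m'(∂_z(f|_m Y))·(f'|_{m'} Y) − m·(f|_m Y)·(∂_z(f'|_{m'} Y)). -/

import Mathlib

open Complex Real Finset

noncomputable section

/-- The upper half plane, as a subset of `ℂ`. -/
def UHP : Set ℂ := {τ : ℂ | 0 < τ.im}

/-- Partial derivative with respect to the first variable `τ`. -/
def dTau (f : ℂ → ℂ → ℂ) : ℂ → ℂ → ℂ := fun τ z => deriv (fun w => f w z) τ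

/-- Partial derivative with respect to the second variable `z`. -/
def dZ (f : ℂ → ℂ → ℂ) : ℂ → ℂ → ℂ := fun τ z => deriv (fun w => f τ w) z

/-- The heat operator `L_m = 8πim ∂/∂τ − ∂²/∂z²`. -/
def heatOp (m : ℤ) (f : ℂ → ℂ → ℂ) : ℂ → ℂ → ℂ :=
  fun τ z => 8 * (π : ℂ) * I * (m : ℂ) * dTau f τ z - dZ (dZ f) τ z

/-- The weight `k`, index `m` slash action of `SL(2,ℤ)` on functions `ℍ × ℂ → ℂ`. -/
def jacobiSlash (k m : ℤ) (M : Matrix.SpecialLinearGroup (Fin 2) ℤ) (f : ℂ → ℂ → ℂ) :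
    ℂ → ℂ → ℂ := fun τ z =>
  ((M.1 1 0 : ℂ) * τ + (M.1 1 1 : ℂ)) ^ (-k) *
    Complex.exp (2 * (π : ℂ) * I * (m : ℂ) *
      (-((M.1 1 0 : ℂ) * z ^ 2) / ((M.1 1 0 : ℂ) * τ + (M.1 1 1 : ℂ)))) *
    f (((M.1 0 0 : ℂ) * τ + (M.1 0 1 : ℂ)) / ((M.1 1 0 : ℂ) * τ + (M.1 1 1 : ℂ)))
      (z / ((M.1 1 0 : ℂ) * τ + (M.1 1 1 : ℂ)))

/-- The index `m` action of the lattice `ℤ²` on functions `ℍ × ℂ → ℂ`. -/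
def latticeSlash (m : ℤ) (Y : ℤ × ℤ) (f : ℂ → ℂ → ℂ) : ℂ → ℂ → ℂ := fun τ z =>
  Complex.exp (2 * (π : ℂ) * I * (m : ℂ) * ((Y.1 : ℂ) ^ 2 * τ + 2 * (Y.1 : ℂ) * z)) *
    f τ (z + (Y.1 : ℂ) * τ + (Y.2 : ℂ))

/-- A Jacobi form of weight `k` and index `m`: a holomorphic function on `ℍ × ℂ`,
invariant under both slash actions, with a Fourier expansion supported on
`n ≥ 0`, `r² ≤ 4nm`. -/
structure IsJacobiForm (k m : ℤ) (f : ℂ → ℂ → ℂ) : Prop where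
  holo : DifferentiableOn ℂ (fun p : ℂ × ℂ => f p.1 p.2) {p : ℂ × ℂ | 0 < p.1.im}
  slash_invariant : ∀ M : Matrix.SpecialLinearGroup (Fin 2) ℤ, ∀ τ ∈ UHP, ∀ z : ℂ,
    jacobiSlash k m M f τ z = f τ z
  lattice_invariant : ∀ Y : ℤ × ℤ, ∀ τ ∈ UHP, ∀ z : ℂ,
    latticeSlash m Y f τ z = f τ z
  fourier : ∃ c : ℤ × ℤ → ℂ,
    (∀ n r : ℤ, (n < 0 ∨ 4 * n * m < r ^ 2) → c (n, r) = 0) ∧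
    ∀ τ ∈ UHP, ∀ z : ℂ,
      f τ z = ∑' nr : ℤ × ℤ, c nr *
        Complex.exp (2 * (π : ℂ) * I * ((nr.1 : ℂ) * τ + (nr.2 : ℂ) * z))

/-- The falling factorial `(x)_n = x(x−1)⋯(x−n+1)`. -/
def ffall (x : ℂ) (n : ℕ) : ℂ := ∏ i ∈ Finset.range n, (x - (i : ℂ))

/-- The combinatorial coefficients `C_{r,s,p}` appearing in the Rankin-Cohen brackets. -/
def Ccoef (α β γ : ℂ) (r s p : ℕ) : ℂ :=
  ffall (α + r + s + p) (s + p) / (r.factorial : ℂ) *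
    (ffall (β + r + s + p) (r + p) / (s.factorial : ℂ)) *
    (ffall (-(γ + (r : ℂ) + s + p)) (r + s) / (p.factorial : ℂ))

/-- The Rankin-Cohen bracket `[f,f']_{X,v}` of two Jacobi forms. -/
def jacobiRC (k k' m m' : ℤ) (X : ℂ) (v : ℕ) (f f' : ℂ → ℂ → ℂ) : ℂ → ℂ → ℂ :=
  fun τ z =>
    ∑ r ∈ Finset.range (v / 2 + 1), ∑ s ∈ Finset.range (v / 2 + 1 - r),
      ∑ i ∈ Finset.range (v % 2 + 1),
        Ccoef ((k : ℂ) - 3/2) ((k' : ℂ) - 3/2) ((k : ℂ) + (k' : ℂ) - 3/2 + ((v % 2 : ℕ) : ℂ))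
            r s (v / 2 - r - s) *
          ((m : ℂ) ^ (v % 2 - i) * (-(m' : ℂ)) ^ i * (1 + (m : ℂ) * X) ^ s *
            (1 - (m' : ℂ) * X) ^ r) *
          (heatOp (m + m'))^[v / 2 - r - s]
            (fun τ' z' =>
              (heatOp m)^[r] (dZ^[i] f) τ' z' * (heatOp m')^[s] (dZ^[v % 2 - i] f') τ' z') τ z



lemma dz_hasDerivAt (g : ℂ → ℂ → ℂ)
    (hg : DifferentiableOn ℂ (fun p : ℂ × ℂ => g p.1 p.2) {p : ℂ × ℂ | 0 < p.1.im})
    (τ : ℂ) (hτ : 0 < τ.im) (w : ℂ) :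
    HasDerivAt (fun w => g τ w) (dZ g τ w) w := by
  have hopen : IsOpen {p : ℂ × ℂ | 0 < p.1.im} :=
    isOpen_lt continuous_const (Complex.continuous_im.comp continuous_fst)
  have hd : DifferentiableAt ℂ (fun p : ℂ × ℂ => g p.1 p.2) (τ, w) :=
    hg.differentiableAt (hopen.mem_nhds hτ)
  have h2 : DifferentiableAt ℂ (fun w => g τ w) w :=
    hd.comp w (DifferentiableAt.prodMk (differentiableAt_const τ) differentiableAt_id)
  exact h2.hasDerivAt

lemma latticeSlash_dz (g : ℂ → ℂ → ℂ)
    (hg : DifferentiableOn ℂ (fun p : ℂ × ℂ => g p.1 p.2) {p : ℂ × ℂ | 0 < p.1.im})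
    (k : ℤ) (Y : ℤ × ℤ) (τ : ℂ) (hτ : 0 < τ.im) (z : ℂ) :
    dZ (latticeSlash k Y g) τ z =
      Complex.exp (2 * (π : ℂ) * I * (k : ℂ) * ((Y.1 : ℂ) ^ 2 * τ + 2 * (Y.1 : ℂ) * z)) *
        (2 * (π : ℂ) * I * (k : ℂ) * (2 * (Y.1 : ℂ)) * g τ (z + (Y.1 : ℂ) * τ + (Y.2 : ℂ)) +
          dZ g τ (z + (Y.1 : ℂ) * τ + (Y.2 : ℂ))) := by
  have hE : HasDerivAt
      (fun w => Complex.exp (2 * (π : ℂ) * I * (k : ℂ) * ((Y.1 : ℂ) ^ 2 * τ + 2 * (Y.1 : ℂ) * w)))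
      (Complex.exp (2 * (π : ℂ) * I * (k : ℂ) * ((Y.1 : ℂ) ^ 2 * τ + 2 * (Y.1 : ℂ) * z)) *
        (2 * (π : ℂ) * I * (k : ℂ) * (2 * (Y.1 : ℂ)))) z := by
    have h1 : HasDerivAt
        (fun w : ℂ => 2 * (π : ℂ) * I * (k : ℂ) * ((Y.1 : ℂ) ^ 2 * τ + 2 * (Y.1 : ℂ) * w))
        (2 * (π : ℂ) * I * (k : ℂ) * (2 * (Y.1 : ℂ))) z := by
      have := ((hasDerivAt_id z).const_mul (2 * (Y.1 : ℂ))).const_add ((Y.1 : ℂ) ^ 2 * τ)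
      have := this.const_mul (2 * (π : ℂ) * I * (k : ℂ))
      simpa [mul_assoc, mul_comm, mul_left_comm] using this
    simpa [mul_comm] using h1.cexp
  have hg2 : HasDerivAt (fun w => g τ (w + (Y.1 : ℂ) * τ + (Y.2 : ℂ)))
      (dZ g τ (z + (Y.1 : ℂ) * τ + (Y.2 : ℂ))) z := by
    have hbase := dz_hasDerivAt g hg τ hτ (z + (Y.1 : ℂ) * τ + (Y.2 : ℂ))
    have hlin : HasDerivAt (fun w : ℂ => w + (Y.1 : ℂ) * τ + (Y.2 : ℂ)) 1 z := by
      simpa using ((hasDerivAt_id z).add_const ((Y.1 : ℂ) * τ)).add_const ((Y.2 : ℂ))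
    have hc := hbase.comp z hlin
    rw [mul_one] at hc
    exact hc
  have := hE.mul hg2
  unfold dZ latticeSlash
  simp only [dZ] at this
  have h3 : HasDerivAt (fun w => Complex.exp (2 * (π : ℂ) * I * (k : ℂ) * ((Y.1 : ℂ) ^ 2 * τ + 2 * (Y.1 : ℂ) * w)) * g τ (w + (Y.1 : ℂ) * τ + (Y.2 : ℂ))) _ z := this
  rw [h3.deriv]
  ring

lemma latticeSlash_apply (g : ℂ → ℂ → ℂ) (k : ℤ) (Y : ℤ × ℤ) (τ z : ℂ) :
    latticeSlash k Y g τ z =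
      Complex.exp (2 * (π : ℂ) * I * (k : ℂ) * ((Y.1 : ℂ) ^ 2 * τ + 2 * (Y.1 : ℂ) * z)) *
        g τ (z + (Y.1 : ℂ) * τ + (Y.2 : ℂ)) := rfl

/-- **Covariance of the first-order bracket under the lattice action**
(Lemma 3 of Choie-Eholzer): for `f`, `f'` holomorphic on `ℍ × ℂ` and any `Y ∈ ℤ²`,
`(m'(∂_z f) f' − m f (∂_z f'))|_{m+m'} Y
  = m'(∂_z(f|_m Y))(f'|_{m'} Y) − m (f|_m Y)(∂_z(f'|_{m'} Y))`. -/
theorem odd_bracket_latticeSlash (f f' : ℂ → ℂ → ℂ)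
    (hf : DifferentiableOn ℂ (fun p : ℂ × ℂ => f p.1 p.2) {p : ℂ × ℂ | 0 < p.1.im})
    (hf' : DifferentiableOn ℂ (fun p : ℂ × ℂ => f' p.1 p.2) {p : ℂ × ℂ | 0 < p.1.im})
    (m m' : ℤ) (Y : ℤ × ℤ) (τ : ℂ) (hτ : τ ∈ UHP) (z : ℂ) :
    latticeSlash (m + m') Y
        (fun τ' z' => (m' : ℂ) * dZ f τ' z' * f' τ' z' - (m : ℂ) * f τ' z' * dZ f' τ' z')
        τ z =
      (m' : ℂ) * dZ (latticeSlash m Y f) τ z * latticeSlash m' Y f' τ z -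
        (m : ℂ) * latticeSlash m Y f τ z * dZ (latticeSlash m' Y f') τ z := by
  have hτ' : 0 < τ.im := hτ
  rw [latticeSlash_dz f hf m Y τ hτ' z, latticeSlash_dz f' hf' m' Y τ hτ' z,
    latticeSlash_apply, latticeSlash_apply, latticeSlash_apply]
  rw [show ((m + m' : ℤ) : ℂ) = (m : ℂ) + (m' : ℂ) by push_cast; ring]
  rw [show 2 * (π : ℂ) * I * ((m : ℂ) + (m' : ℂ)) * ((Y.1 : ℂ) ^ 2 * τ + 2 * (Y.1 : ℂ) * z)
      = 2 * (π : ℂ) * I * (m : ℂ) * ((Y.1 : ℂ) ^ 2 * τ + 2 * (Y.1 : ℂ) * z)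
      + 2 * (π : ℂ) * I * (m' : ℂ) * ((Y.1 : ℂ) ^ 2 * τ + 2 * (Y.1 : ℂ) * z) by ring,
    Complex.exp_add]
  ring

end
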